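/- The β-β bound with Q_Y = P_Y recovers a weakened dependence-testing bound: for every ε ∈ (0,1) and input distribution P_X, there exists an (M,ε) average-error code whenever ε ≥ inf_{α ∈ (0,1)} { 1 − α + (M/2) β_α(P_{XY}, P_X × P_Y) }. -/

import Mathlib

open MeasureTheory

noncomputable def beta {W : Type*} [MeasurableSpace W] (α : ℝ) (P Q : MeasureTheory.Measure W) : ℝ :=
  sInf {b : ℝ | ∃ T : W → ℝ, Measurable T ∧ (∀ w, T w ∈ Set.Icc (0:ℝ) 1) ∧
    α ≤ ∫ w, T w ∂P ∧ b = ∫ w, T w ∂Q}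

/-- Average error probability of the code `(f, g)` over the channel `κ`
(`g y = none` represents the error symbol `e`). -/
noncomputable def avgError {A B : Type*} [MeasurableSpace A] [MeasurableSpace B]
    (κ : ProbabilityTheory.Kernel A B) (M : ℕ) (f : Fin M → A)
    (g : B → Option (Fin M)) : ℝ :=
  (1 / (M : ℝ)) * ∑ j : Fin M, (1 - (κ (f j) {y | g y = some j}).toReal)



instance {M : ℕ} : MeasurableSpace (Fin M) := ⊤
instance {M : ℕ} : MeasurableSpace (Option (Fin M)) := ⊤

set_option linter.unusedSectionVars false
set_option linter.unusedVariables false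

lemma prob_toReal_le_one {W : Type*} [MeasurableSpace W] (μ : Measure W)
    [IsProbabilityMeasure μ] (s : Set W) : (μ s).toReal ≤ 1 := by
  have h := ENNReal.toReal_mono (measure_ne_top μ Set.univ) (measure_mono (Set.subset_univ s))
  simpa using h

lemma layercake_Ioo {W : Type*} [MeasurableSpace W] (μ : Measure W) [IsProbabilityMeasure μ]
    {T : W → ℝ} (hT : Measurable T) (h01 : ∀ w, T w ∈ Set.Icc (0:ℝ) 1) :
    ∫ w, T w ∂μ = ∫ t in Set.Ioo (0:ℝ) 1, (μ {w | t < T w}).toReal := by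
  have hint : Integrable T μ := by
    refine Integrable.mono' (integrable_const 1) hT.aestronglyMeasurable ?_
    exact Filter.Eventually.of_forall fun w => by
      rw [Real.norm_eq_abs, abs_of_nonneg (h01 w).1]; exact (h01 w).2
  rw [hint.integral_eq_integral_meas_lt (Filter.Eventually.of_forall fun w => (h01 w).1)]
  rw [← Set.Ioo_union_Ici_eq_Ioi (zero_lt_one : (0:ℝ) < 1)]
  refine integral_union_eq_left_of_forall measurableSet_Ici fun t ht => ?_
  have : {w | t < T w} = ∅ := by
    ext w
    simp only [Set.mem_setOf_eq, Set.mem_empty_iff_false, iff_false, not_lt]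
    exact (h01 w).2.trans ht
  rw [this]
  simp

lemma derandomize {W : Type*} [MeasurableSpace W] (μ ν : Measure W)
    [IsProbabilityMeasure μ] [IsProbabilityMeasure ν] {T : W → ℝ}
    (hT : Measurable T) (h01 : ∀ w, T w ∈ Set.Icc (0:ℝ) 1) {c : ℝ} (hc : 0 ≤ c) :
    ∃ S : Set W, MeasurableSet S ∧
      (∫ w, T w ∂μ) - c * (∫ w, T w ∂ν) ≤ (μ S).toReal - c * (ν S).toReal := by
  by_contra hS
  push_neg at hS
  set V := (∫ w, T w ∂μ) - c * (∫ w, T w ∂ν) with hV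
  have hSlt : ∀ S : Set W, MeasurableSet S → (μ S).toReal - c * (ν S).toReal < V := by
    intro S hSm
    exact hS S hSm
  set p : ℝ → ℝ := fun t => (μ {w | t < T w}).toReal with hp
  set q : ℝ → ℝ := fun t => (ν {w | t < T w}).toReal with hq
  have hpa : Antitone p := fun s t hst =>
    ENNReal.toReal_mono (measure_ne_top _ _) (measure_mono fun w hw => lt_of_le_of_lt hst hw)
  have hqa : Antitone q := fun s t hst =>
    ENNReal.toReal_mono (measure_ne_top _ _) (measure_mono fun w hw => lt_of_le_of_lt hst hw)
  set m0 := volume.restrict (Set.Ioo (0:ℝ) 1) with hm0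
  haveI : IsProbabilityMeasure m0 := by
    constructor
    rw [hm0, Measure.restrict_apply_univ, Real.volume_Ioo]
    norm_num
  have hpint : Integrable p m0 := by
    refine Integrable.mono' (integrable_const 1) hpa.measurable.aestronglyMeasurable ?_
    refine Filter.Eventually.of_forall fun t => ?_
    rw [Real.norm_eq_abs, abs_of_nonneg ENNReal.toReal_nonneg]
    exact prob_toReal_le_one μ _
  have hqint : Integrable q m0 := by
    refine Integrable.mono' (integrable_const 1) hqa.measurable.aestronglyMeasurable ?_
    refine Filter.Eventually.of_forall fun t => ?_
    rw [Real.norm_eq_abs, abs_of_nonneg ENNReal.toReal_nonneg]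
    exact prob_toReal_le_one ν _
  have hfint : Integrable (fun t => p t - c * q t) m0 := hpint.sub (hqint.const_mul c)
  have hmean : ∫ t, (p t - c * q t) ∂m0 = V := by
    rw [integral_sub hpint (hqint.const_mul c), MeasureTheory.integral_const_mul, hV,
      layercake_Ioo μ hT h01, layercake_Ioo ν hT h01]
  have hflt : ∀ t : ℝ, p t - c * q t < V := fun t =>
    hSlt _ (measurableSet_lt measurable_const hT)
  -- integral of V - f is zero, V - f > 0, contradiction
  have h0 : ∫ t, (V - (p t - c * q t)) ∂m0 = 0 := by
    rw [integral_sub (integrable_const _) hfint, integral_const, hmean]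
    simp
  have hz := (integral_eq_zero_iff_of_nonneg_ae
    (Filter.Eventually.of_forall fun t => sub_nonneg.2 (hflt t).le)
    ((integrable_const _).sub hfint)).mp h0
  rw [Filter.EventuallyEq, ae_iff] at hz
  have huniv : {t : ℝ | ¬ (V - (p t - c * q t)) = (0 : ℝ → ℝ) t} = Set.univ := by
    ext t
    simp only [Set.mem_univ, iff_true, Set.mem_setOf_eq, Pi.zero_apply]
    exact ne_of_gt (sub_pos.2 (hflt t))
  rw [huniv, measure_univ] at hz
  exact one_ne_zero hz

lemma exists_good_set {W : Type*} [MeasurableSpace W] (P Q : Measure W)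
    [IsProbabilityMeasure P] [IsProbabilityMeasure Q]
    (ε : ℝ) (hε : ε ∈ Set.Ioo (0 : ℝ) 1) (M : ℕ)
    (hεge : sInf {x : ℝ | ∃ α ∈ Set.Ioo (0 : ℝ) 1, x = 1 - α + ((M : ℝ) / 2) * beta α P Q} ≤ ε) :
    ∃ S : Set W, MeasurableSet S ∧
      1 - (P S).toReal + (((M : ℝ) - 1) / 2) * (Q S).toReal ≤ ε := by
  have hM0 : (0:ℝ) ≤ (M:ℝ) := Nat.cast_nonneg M
  -- Step A: for every n, a set with  1 - ε - 1/(n+1) ≤ P S - (M/2) Q S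
  have key : ∀ n : ℕ, ∃ S : Set W, MeasurableSet S ∧
      1 - ε - 1/((n:ℝ)+1) ≤ (P S).toReal - ((M:ℝ)/2) * (Q S).toReal := by
    intro n
    have hδ : (0:ℝ) < 1/((n:ℝ)+1) := by positivity
    set δ := 1/((n:ℝ)+1) with hδdef
    -- the defining set is nonempty
    have hne : {x : ℝ | ∃ α ∈ Set.Ioo (0 : ℝ) 1,
        x = 1 - α + ((M : ℝ) / 2) * beta α P Q}.Nonempty := by
      exact ⟨1 - (1/2 : ℝ) + ((M : ℝ) / 2) * beta (1/2) P Q, ⟨1/2, by norm_num, rfl⟩⟩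
    obtain ⟨x, ⟨α, hα, rfl⟩, hx⟩ :=
      exists_lt_of_csInf_lt hne (lt_of_le_of_lt hεge (by linarith : ε < ε + δ/2))
    -- the β set is nonempty and bounded below
    set Bα := {b : ℝ | ∃ T : W → ℝ, Measurable T ∧ (∀ w, T w ∈ Set.Icc (0:ℝ) 1) ∧
      α ≤ ∫ w, T w ∂P ∧ b = ∫ w, T w ∂Q} with hBdef
    have hBne : Bα.Nonempty := by
      refine ⟨∫ w, (1:ℝ) ∂Q, fun _ => 1, measurable_const, fun w => ⟨zero_le_one, le_refl 1⟩, ?_, rfl⟩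
      rw [integral_const]
      simp [hα.2.le]
    have hBbdd : BddBelow Bα := by
      refine ⟨0, fun b hb => ?_⟩
      obtain ⟨T, hT, h01, hTP, rfl⟩ := hb
      exact integral_nonneg fun w => (h01 w).1
    have hβpos : (0:ℝ) < δ/((M:ℝ)+1) := by positivity
    obtain ⟨b, hbB, hb⟩ := exists_lt_of_csInf_lt hBne
      (lt_add_of_pos_right (sInf Bα) hβpos)
    obtain ⟨T, hT, h01, hTP, rfl⟩ := hbB
    have hβ : beta α P Q = sInf Bα := rfl
    -- (M/2) * (δ/(M+1)) ≤ δ/2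
    have hhalf : ((M:ℝ)/2) * (δ/((M:ℝ)+1)) ≤ δ/2 := by
      rw [div_mul_div_comm, div_le_div_iff₀ (by positivity) (by norm_num)]
      nlinarith
    have hMhalf : (0:ℝ) ≤ (M:ℝ)/2 := by positivity
    obtain ⟨S, hSm, hSle⟩ := derandomize P Q hT h01 hMhalf
    refine ⟨S, hSm, le_trans ?_ hSle⟩
    -- arithmetic
    have h1 : 1 - α + ((M : ℝ) / 2) * sInf Bα < ε + δ/2 := by
      rw [hβ] at hx; exact hx
    have h2 : ((M:ℝ)/2) * (∫ w, T w ∂Q) ≤ ((M:ℝ)/2) * sInf Bα + δ/2 := by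
      have h2a := mul_le_mul_of_nonneg_left hb.le hMhalf
      calc ((M:ℝ)/2) * (∫ w, T w ∂Q) ≤ ((M:ℝ)/2) * (sInf Bα + δ/((M:ℝ)+1)) := h2a
        _ = ((M:ℝ)/2) * sInf Bα + ((M:ℝ)/2) * (δ/((M:ℝ)+1)) := by ring
        _ ≤ ((M:ℝ)/2) * sInf Bα + δ/2 := by linarith
    linarith
  -- Step B: limsup construction
  by_contra hcon
  push_neg at hcon
  have hcon' : ∀ S : Set W, MeasurableSet S →
      (P S).toReal - (((M:ℝ)-1)/2) * (Q S).toReal < 1 - ε := by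
    intro S hSm
    have := hcon S hSm
    linarith
  -- choose S_n, get smallness of Q
  choose Sn hSnm hSn using key
  have hQsmall : ∀ n : ℕ, (Q (Sn n)).toReal < 2/((n:ℝ)+1) := by
    intro n
    have h1 := hSn n
    have h2 := hcon' (Sn n) (hSnm n)
    have h3 : (((M:ℝ)-1)/2) * (Q (Sn n)).toReal
        = ((M:ℝ)/2) * (Q (Sn n)).toReal - (Q (Sn n)).toReal/2 := by ring
    rw [h3] at h2
    rw [show (2:ℝ)/((n:ℝ)+1) = 2*(1/((n:ℝ)+1)) from by ring]
    linarith
  have hPbig : ∀ n : ℕ, 1 - ε - 1/((n:ℝ)+1) ≤ (P (Sn n)).toReal := by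
    intro n
    have h1 := hSn n
    have : (0:ℝ) ≤ ((M:ℝ)/2) * (Q (Sn n)).toReal :=
      mul_nonneg (by positivity) ENNReal.toReal_nonneg
    linarith
  -- subsequence: C k = Sn (2^(k+2) - 1), so (n:ℝ)+1 = 2^(k+2)
  set C : ℕ → Set W := fun k => Sn (2^(k+2) - 1) with hC
  have hcast : ∀ k : ℕ, ((2^(k+2) - 1 : ℕ) : ℝ) + 1 = 2^(k+2) := by
    intro k
    have h2 : (1:ℕ) ≤ 2^(k+2) := Nat.one_le_two_pow
    push_cast [Nat.cast_sub h2]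
    ring
  have hQC : ∀ k : ℕ, Q (C k) ≤ ENNReal.ofReal ((1/2:ℝ)^(k+1)) := by
    intro k
    have h := hQsmall (2^(k+2) - 1)
    rw [hcast k] at h
    have h2 : (2:ℝ)/(2:ℝ)^(k+2) = (1/2:ℝ)^(k+1) := by
      rw [div_eq_iff (by positivity)]
      rw [one_div, inv_pow]
      field_simp
      ring
    rw [h2] at h
    have := ENNReal.ofReal_le_ofReal h.le
    rwa [ENNReal.ofReal_toReal (measure_ne_top _ _)] at this
  have hPC : ∀ k : ℕ, ENNReal.ofReal (1 - ε - (1/2:ℝ)^(k+2)) ≤ P (C k) := by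
    intro k
    have h := hPbig (2^(k+2) - 1)
    rw [hcast k] at h
    have h2 : (1:ℝ)/(2:ℝ)^(k+2) = (1/2:ℝ)^(k+2) := by
      rw [one_div, one_div, inv_pow]
    rw [h2] at h
    calc ENNReal.ofReal (1 - ε - (1/2:ℝ)^(k+2)) ≤ ENNReal.ofReal ((P (C k)).toReal) :=
          ENNReal.ofReal_le_ofReal h
      _ = P (C k) := ENNReal.ofReal_toReal (measure_ne_top _ _)
  set U : ℕ → Set W := fun m => ⋃ k : ℕ, C (m + k) with hU
  have hUm : ∀ m, MeasurableSet (U m) :=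
    fun m => MeasurableSet.iUnion fun k => hSnm _
  have hUanti : Antitone U := by
    intro m m' hmm'
    refine Set.iUnion_subset fun k => ?_
    rw [show m' + k = m + ((m' - m) + k) from by omega]
    exact Set.subset_iUnion (fun k => C (m + k)) _
  have hQU : ∀ m, Q (U m) ≤ ENNReal.ofReal ((1/2:ℝ)^m) := by
    intro m
    have hrw : (fun k : ℕ => (1/2:ℝ)^(m+k+1)) = fun k => (1/2:ℝ)^(m+1) * (1/2:ℝ)^k := by
      funext k
      rw [← pow_add]
      congr 1
      omega
    have hsum : Summable (fun k : ℕ => (1/2:ℝ)^(m+k+1)) := by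
      rw [hrw]
      exact (summable_geometric_of_lt_one (by norm_num) (by norm_num)).mul_left _
    have htsum : ∑' k : ℕ, (1/2:ℝ)^(m+k+1) = (1/2:ℝ)^m := by
      rw [hrw, tsum_mul_left, tsum_geometric_of_lt_one (by norm_num) (by norm_num), pow_succ]
      rw [mul_assoc]
      norm_num
    calc Q (U m) ≤ ∑' k : ℕ, Q (C (m + k)) := measure_iUnion_le _
      _ ≤ ∑' k : ℕ, ENNReal.ofReal ((1/2:ℝ)^(m + k + 1)) :=
          ENNReal.tsum_le_tsum fun k => hQC (m + k)
      _ = ENNReal.ofReal (∑' k : ℕ, (1/2:ℝ)^(m + k + 1)) :=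
          (ENNReal.ofReal_tsum_of_nonneg (fun k => by positivity) hsum).symm
      _ = ENNReal.ofReal ((1/2:ℝ)^m) := by rw [htsum]
  set L := ⋂ m, U m with hL
  have hLm : MeasurableSet L := MeasurableSet.iInter hUm
  have hQL : Q L = 0 := by
    have hle : ∀ m : ℕ, (Q L).toReal ≤ (1/2:ℝ)^m := by
      intro m
      refine ENNReal.toReal_le_of_le_ofReal (by positivity) ?_
      exact le_trans (measure_mono (Set.iInter_subset U m)) (hQU m)
    have htd : Filter.Tendsto (fun m : ℕ => (1/2:ℝ)^m) Filter.atTop (nhds 0) :=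
      tendsto_pow_atTop_nhds_zero_of_lt_one (by norm_num) (by norm_num)
    have h0 : (Q L).toReal ≤ 0 := ge_of_tendsto' htd hle
    have h0' : (Q L).toReal = 0 := le_antisymm h0 ENNReal.toReal_nonneg
    rcases (ENNReal.toReal_eq_zero_iff _).mp h0' with h | h
    · exact h
    · exact absurd h (measure_ne_top _ _)
  have hPL : ENNReal.ofReal (1 - ε) ≤ P L := by
    have htd := tendsto_measure_iInter_atTop (μ := P)
      (fun m => (hUm m).nullMeasurableSet) hUanti ⟨0, measure_ne_top _ _⟩
    have h4 : Filter.Tendsto (fun m : ℕ => (1/2:ℝ)^(m+2)) Filter.atTop (nhds 0) := by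
      have h5 : (fun m : ℕ => (1/2:ℝ)^(m+2)) = fun m => (1/2:ℝ)^m * (1/2:ℝ)^2 := by
        funext m
        rw [pow_add]
      rw [h5]
      have h6 := (tendsto_pow_atTop_nhds_zero_of_lt_one
        (by norm_num : (0:ℝ) ≤ 1/2) (by norm_num : (1/2:ℝ) < 1)).mul_const ((1/2:ℝ)^2)
      rwa [zero_mul] at h6
    have hofReal : Filter.Tendsto (fun m : ℕ => ENNReal.ofReal (1 - ε - (1/2:ℝ)^(m+2)))
        Filter.atTop (nhds (ENNReal.ofReal (1 - ε))) := by
      apply ENNReal.tendsto_ofReal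
      simpa using tendsto_const_nhds.sub h4
    refine le_of_tendsto_of_tendsto' hofReal htd fun m => ?_
    refine le_trans (hPC m) (measure_mono ?_)
    simpa using Set.subset_iUnion (fun k => C (m + k)) 0
  have hPLr : 1 - ε ≤ (P L).toReal := by
    have h6 := ENNReal.toReal_mono (measure_ne_top _ _) hPL
    rwa [ENNReal.toReal_ofReal (by linarith [hε.2] : (0:ℝ) ≤ 1 - ε)] at h6
  have h7 := hcon' L hLm
  rw [hQL] at h7
  simp at h7
  linarith

section Decoder

variable {A B : Type*} [MeasurableSpace A] [MeasurableSpace B]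
variable {M : ℕ} (S : Set (A × B)) (x : Fin M → A)

open Classical in
noncomputable def decoder : B → Option (Fin M) := fun y =>
  Fin.find? (fun j => decide ((x j, y) ∈ S))

lemma decoder_eq_some_iff {y : B} {j : Fin M} :
    decoder S x y = some j ↔
      ((x j, y) ∈ S ∧ ∀ i : Fin M, (x i, y) ∈ S → j ≤ i) := by
  rw [decoder, Fin.find?_eq_some_iff]
  simp only [decide_eq_true_eq, decide_eq_false_iff_not]
  exact and_congr_right fun _ => ⟨fun h i hi => not_lt.mp fun hlt => h i hlt hi,
    fun h i hlt hi => absurd (h i hi) (not_le.mpr hlt)⟩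

lemma decoder_eq_none_iff {y : B} :
    decoder S x y = none ↔ ∀ j : Fin M, (x j, y) ∉ S := by
  rw [decoder, Fin.find?_eq_none_iff]
  simp

lemma decoder_measurable (hS : MeasurableSet S) : Measurable (decoder S x) := by
  haveI : MeasurableSingletonClass (Option (Fin M)) :=
    ⟨fun _ => MeasurableSpace.measurableSet_top⟩
  refine measurable_to_countable' fun o => ?_
  rcases o with _ | j
  · have : decoder S x ⁻¹' {none} = (⋃ j : Fin M, Prod.mk (x j) ⁻¹' S)ᶜ := by
      ext y
      simp only [Set.mem_preimage, Set.mem_singleton_iff, decoder_eq_none_iff,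
        Set.mem_compl_iff, Set.mem_iUnion, not_exists]
    rw [this]
    exact (MeasurableSet.iUnion fun j => measurable_prodMk_left hS).compl
  · have : decoder S x ⁻¹' {some j} =
        (Prod.mk (x j) ⁻¹' S) ∩ ⋂ i : Fin M, {y | (x i, y) ∈ S → j ≤ i} := by
      ext y
      simp only [Set.mem_preimage, Set.mem_singleton_iff, decoder_eq_some_iff,
        Set.mem_inter_iff, Set.mem_iInter, Set.mem_setOf_eq]
    rw [this]
    refine (measurable_prodMk_left hS).inter (MeasurableSet.iInter fun i => ?_)
    by_cases hji : j ≤ i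
    · have : {y : B | (x i, y) ∈ S → j ≤ i} = Set.univ :=
        Set.eq_univ_of_forall fun y _ => hji
      rw [this]
      exact MeasurableSet.univ
    · have : {y : B | (x i, y) ∈ S → j ≤ i} = (Prod.mk (x i) ⁻¹' S)ᶜ := by
        ext y
        simp only [Set.mem_setOf_eq, Set.mem_compl_iff, Set.mem_preimage]
        exact ⟨fun h hp => hji (h hp), fun h hp => absurd hp h⟩
      rw [this]
      exact (measurable_prodMk_left hS).compl

end Decoder

section PiLemmas

variable {ι : Type*} [Fintype ι] [DecidableEq ι] {α : Type*} [MeasurableSpace α]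
  (μ : Measure α) [IsProbabilityMeasure μ]

lemma map_eval_pi (i : ι) :
    (Measure.pi fun _ : ι => μ).map (Function.eval i) = μ := by
  ext s hs
  rw [Measure.map_apply (measurable_pi_apply i) hs]
  have hpre : Function.eval i ⁻¹' s =
      Set.pi Set.univ (Function.update (fun _ : ι => (Set.univ : Set α)) i s) := by
    ext x
    simp only [Set.mem_preimage, Set.mem_pi, Set.mem_univ, true_implies]
    constructor
    · intro hx k
      by_cases hk : k = i
      · subst hk; rwa [Function.update_self]
      · rw [Function.update_of_ne hk]; trivial
    · intro hx
      have := hx i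
      rwa [Function.update_self] at this
  rw [hpre, Measure.pi_pi]
  have hupd : ∀ k, μ (Function.update (fun _ : ι => (Set.univ : Set α)) i s k)
      = Function.update (fun _ : ι => (1 : ENNReal)) i (μ s) k := by
    intro k
    by_cases hk : k = i
    · subst hk; rw [Function.update_self, Function.update_self]
    · rw [Function.update_of_ne hk, Function.update_of_ne hk]; exact measure_univ
  rw [Finset.prod_congr rfl fun k _ => hupd k,
    Finset.prod_update_of_mem (Finset.mem_univ i)]
  simp

lemma map_pair_pi (i j : ι) (hij : i ≠ j) :
    (Measure.pi fun _ : ι => μ).map (fun x => (x i, x j)) = μ.prod μ := by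
  refine (Measure.prod_eq fun s t hs ht => ?_).symm
  rw [Measure.map_apply ((measurable_pi_apply i).prodMk (measurable_pi_apply j)) (hs.prod ht)]
  have hpre : (fun x : ι → α => (x i, x j)) ⁻¹' (s ×ˢ t) =
      Set.pi Set.univ (Function.update (Function.update
        (fun _ : ι => (Set.univ : Set α)) i s) j t) := by
    ext x
    simp only [Set.mem_preimage, Set.mem_prod, Set.mem_pi, Set.mem_univ, true_implies]
    constructor
    · rintro ⟨hxi, hxj⟩ k
      by_cases hk : k = j
      · subst hk; rwa [Function.update_self]
      · rw [Function.update_of_ne hk]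
        by_cases hk' : k = i
        · subst hk'; rwa [Function.update_self]
        · rw [Function.update_of_ne hk']; trivial
    · intro hx
      constructor
      · have := hx i
        rwa [Function.update_of_ne hij, Function.update_self] at this
      · have := hx j
        rwa [Function.update_self] at this
  rw [hpre, Measure.pi_pi]
  have hupd : ∀ k, μ (Function.update (Function.update
      (fun _ : ι => (Set.univ : Set α)) i s) j t k)
      = Function.update (Function.update (fun _ : ι => (1 : ENNReal)) i (μ s)) j (μ t) k := by
    intro k
    by_cases hk : k = j
    · subst hk; rw [Function.update_self, Function.update_self]
    · rw [Function.update_of_ne hk, Function.update_of_ne hk]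
      by_cases hk' : k = i
      · subst hk'; rw [Function.update_self, Function.update_self]
      · rw [Function.update_of_ne hk', Function.update_of_ne hk']; exact measure_univ
  rw [Finset.prod_congr rfl fun k _ => hupd k,
    Finset.prod_update_of_mem (Finset.mem_univ j),
    Finset.prod_update_of_mem (by simp [hij] : i ∈ Finset.univ \ {j})]
  simp [mul_comm]

end PiLemmas

section Coding

open ProbabilityTheory

instance bind_prob' {A B : Type*} [MeasurableSpace A] [MeasurableSpace B]
    (PX : Measure A) [IsProbabilityMeasure PX] (κ : ProbabilityTheory.Kernel A B)
    [ProbabilityTheory.IsMarkovKernel κ] : IsProbabilityMeasure (PX.bind κ) := by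
  constructor
  rw [Measure.bind_apply MeasurableSet.univ κ.measurable.aemeasurable]
  simp

variable {A B : Type*} [MeasurableSpace A] [MeasurableSpace B]
  (κ : Kernel A B) [IsMarkovKernel κ]
  (PX : Measure A) [IsProbabilityMeasure PX]
  {M : ℕ} {S : Set (A × B)}

lemma prob_toReal_le_one' {W : Type*} [MeasurableSpace W] (μ : Measure W)
    [IsProbabilityMeasure μ] (s : Set W) : (μ s).toReal ≤ 1 := by
  have h := ENNReal.toReal_mono (measure_ne_top μ Set.univ) (measure_mono (Set.subset_univ s))
  simpa using h

lemma pointwise_bound (x : Fin M → A) (j : Fin M) :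
    1 - (κ (x j) {y | decoder S x y = some j}).toReal ≤
      (1 - (κ (x j) (Prod.mk (x j) ⁻¹' S)).toReal)
        + ∑ i ∈ Finset.Iio j, (κ (x j) (Prod.mk (x i) ⁻¹' S)).toReal := by
  have hsub : (Prod.mk (x j) ⁻¹' S) ⊆
      {y | decoder S x y = some j} ∪ ⋃ i ∈ Finset.Iio j, Prod.mk (x i) ⁻¹' S := by
    intro y hy
    cases ho : decoder S x y with
    | none => exact absurd hy ((decoder_eq_none_iff S x).mp ho j)
    | some j0 =>
      have hprop := (decoder_eq_some_iff S x).mp ho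
      by_cases hc : j0 = j
      · subst hc
        exact Or.inl ho
      · have hlt : j0 < j := lt_of_le_of_ne (hprop.2 j hy) hc
        exact Or.inr (Set.mem_biUnion (Finset.mem_Iio.mpr hlt) hprop.1)
  have hm : κ (x j) (Prod.mk (x j) ⁻¹' S) ≤
      κ (x j) {y | decoder S x y = some j}
        + ∑ i ∈ Finset.Iio j, κ (x j) (Prod.mk (x i) ⁻¹' S) :=
    le_trans (measure_mono hsub) (le_trans (measure_union_le _ _)
      (add_le_add le_rfl (measure_biUnion_finset_le _ _)))
  have hsumne : (∑ i ∈ Finset.Iio j, κ (x j) (Prod.mk (x i) ⁻¹' S)) ≠ ⊤ :=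
    (ENNReal.sum_lt_top.mpr fun i _ => measure_lt_top _ _).ne
  have hrhs : κ (x j) {y | decoder S x y = some j}
      + ∑ i ∈ Finset.Iio j, κ (x j) (Prod.mk (x i) ⁻¹' S) ≠ ⊤ :=
    ENNReal.add_ne_top.mpr ⟨measure_ne_top _ _, hsumne⟩
  have hmr := ENNReal.toReal_mono hrhs hm
  rw [ENNReal.toReal_add (measure_ne_top _ _) hsumne,
    ENNReal.toReal_sum (fun i _ => measure_ne_top _ _)] at hmr
  linarith

lemma phi_measurable (hS : MeasurableSet S) :
    Measurable fun p : A × A => κ p.2 (Prod.mk p.1 ⁻¹' S) := by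
  have h1 : MeasurableSet {q : (A × A) × B | (q.1.1, q.2) ∈ S} :=
    ((measurable_fst.comp measurable_fst).prodMk measurable_snd) hS
  have h2 := Kernel.measurable_kernel_prodMk_left
    (κ := κ.comap Prod.snd measurable_snd) h1
  simp only [Kernel.comap_apply] at h2
  exact h2

lemma int_diag (hS : MeasurableSet S) (j : Fin M) :
    ∫ x : Fin M → A, (κ (x j) (Prod.mk (x j) ⁻¹' S)).toReal
        ∂(Measure.pi fun _ : Fin M => PX)
      = ((PX.compProd κ) S).toReal := by
  have hψm : Measurable fun a : A => κ a (Prod.mk a ⁻¹' S) :=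
    Kernel.measurable_kernel_prodMk_left hS
  have hmap := map_eval_pi (ι := Fin M) PX j
  have hInt := integral_map (μ := Measure.pi fun _ : Fin M => PX)
    (φ := Function.eval j) (measurable_pi_apply j).aemeasurable
    (f := fun a => (κ a (Prod.mk a ⁻¹' S)).toReal)
    (by rw [hmap]; exact hψm.ennreal_toReal.aestronglyMeasurable)
  rw [hmap] at hInt
  calc ∫ x : Fin M → A, (κ (x j) (Prod.mk (x j) ⁻¹' S)).toReal
        ∂(Measure.pi fun _ : Fin M => PX)
      = ∫ a, (κ a (Prod.mk a ⁻¹' S)).toReal ∂PX := hInt.symm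
    _ = (∫⁻ a, κ a (Prod.mk a ⁻¹' S) ∂PX).toReal :=
        integral_toReal hψm.aemeasurable
          (Filter.Eventually.of_forall fun a => measure_lt_top _ _)
    _ = ((PX.compProd κ) S).toReal := by rw [Measure.compProd_apply hS]

lemma int_pair (hS : MeasurableSet S) {i j : Fin M} (hij : i ≠ j) :
    ∫ x : Fin M → A, (κ (x j) (Prod.mk (x i) ⁻¹' S)).toReal
        ∂(Measure.pi fun _ : Fin M => PX)
      = ((PX.prod (PX.bind κ)) S).toReal := by
  have hΦm : Measurable fun p : A × A => κ p.2 (Prod.mk p.1 ⁻¹' S) := phi_measurable κ hS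
  have hmap := map_pair_pi (ι := Fin M) PX i j hij
  have hInt := integral_map (μ := Measure.pi fun _ : Fin M => PX)
    (φ := fun x => (x i, x j))
    (((measurable_pi_apply i).prodMk (measurable_pi_apply j)).aemeasurable)
    (f := fun p : A × A => (κ p.2 (Prod.mk p.1 ⁻¹' S)).toReal)
    (by rw [hmap]; exact hΦm.ennreal_toReal.aestronglyMeasurable)
  rw [hmap] at hInt
  calc ∫ x : Fin M → A, (κ (x j) (Prod.mk (x i) ⁻¹' S)).toReal
        ∂(Measure.pi fun _ : Fin M => PX)
      = ∫ p : A × A, (κ p.2 (Prod.mk p.1 ⁻¹' S)).toReal ∂(PX.prod PX) := hInt.symm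
    _ = (∫⁻ p : A × A, κ p.2 (Prod.mk p.1 ⁻¹' S) ∂(PX.prod PX)).toReal :=
        integral_toReal hΦm.aemeasurable
          (Filter.Eventually.of_forall fun p => measure_lt_top _ _)
    _ = ((PX.prod (PX.bind κ)) S).toReal := by
        rw [Measure.prod_apply hS, lintegral_prod _ hΦm.aemeasurable]
        refine congrArg ENNReal.toReal (lintegral_congr fun a => ?_)
        exact (Measure.bind_apply (measurable_prodMk_left hS) κ.measurable.aemeasurable).symm

lemma exists_le_integral' {W : Type*} [MeasurableSpace W] (μ : Measure W) [IsProbabilityMeasure μ]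
    {f : W → ℝ} (hf : Integrable f μ) : ∃ w, f w ≤ ∫ w, f w ∂μ := by
  by_contra h
  push_neg at h
  set c := ∫ w, f w ∂μ with hc
  have h0 : ∫ w, (f w - c) ∂μ = 0 := by
    rw [integral_sub hf (integrable_const _), integral_const]
    simp [hc]
  have hz := (integral_eq_zero_iff_of_nonneg_ae
    (Filter.Eventually.of_forall fun w => sub_nonneg.2 (h w).le)
    (hf.sub (integrable_const _))).mp h0
  rw [Filter.EventuallyEq, ae_iff] at hz
  have huniv : {w | ¬ (f w - c) = (0 : W → ℝ) w} = Set.univ := by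
    ext w
    simp only [Set.mem_univ, iff_true, Set.mem_setOf_eq, Pi.zero_apply]
    exact ne_of_gt (sub_pos.2 (h w))
  rw [huniv, measure_univ] at hz
  exact one_ne_zero hz

lemma coding_exists (hS : MeasurableSet S) (hM : 0 < M) :
    ∃ f : Fin M → A, ∃ g : B → Option (Fin M), Measurable g ∧
      avgError κ M f g ≤ 1 - ((PX.compProd κ) S).toReal
        + (((M:ℝ)-1)/2) * ((PX.prod (PX.bind κ)) S).toReal := by
  set μpi := (Measure.pi fun _ : Fin M => PX) with hμpi
  set PSr := ((PX.compProd κ) S).toReal with hPSr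
  set QSr := ((PX.prod (PX.bind κ)) S).toReal with hQSr
  set φ : A × A → ℝ := fun p => (κ p.2 (Prod.mk p.1 ⁻¹' S)).toReal with hφ
  have hφm : Measurable φ := (phi_measurable κ hS).ennreal_toReal
  have hφ01 : ∀ p, φ p ∈ Set.Icc (0:ℝ) 1 :=
    fun p => ⟨ENNReal.toReal_nonneg, prob_toReal_le_one' _ _⟩
  set F : (Fin M → A) → ℝ := fun x =>
    (1/(M:ℝ)) * ∑ j : Fin M, ((1 - φ (x j, x j)) + ∑ i ∈ Finset.Iio j, φ (x i, x j)) with hF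
  have hint2 : ∀ i j : Fin M, Integrable (fun x : Fin M → A => φ (x i, x j)) μpi := by
    intro i j
    have hm : Measurable fun x : Fin M → A => φ (x i, x j) :=
      hφm.comp ((measurable_pi_apply i).prodMk (measurable_pi_apply j))
    refine Integrable.mono' (integrable_const 1) hm.aestronglyMeasurable ?_
    refine Filter.Eventually.of_forall fun x => ?_
    rw [Real.norm_eq_abs, abs_of_nonneg (hφ01 _).1]
    exact (hφ01 _).2
  have hterm : ∀ j : Fin M, Integrable (fun x : Fin M → A =>
      (1 - φ (x j, x j)) + ∑ i ∈ Finset.Iio j, φ (x i, x j)) μpi :=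
    fun j => ((integrable_const 1).sub (hint2 j j)).add
      (integrable_finset_sum _ fun i _ => hint2 i j)
  have hFint : Integrable F μpi :=
    (integrable_finset_sum _ fun j _ => hterm j).const_mul _
  have hpb : ∀ x : Fin M → A, avgError κ M x (decoder S x) ≤ F x := by
    intro x
    have he : avgError κ M x (decoder S x) =
        (1/(M:ℝ)) * ∑ j : Fin M, (1 - (κ (x j) {y | decoder S x y = some j}).toReal) := rfl
    rw [he, hF]
    refine mul_le_mul_of_nonneg_left ?_ (by positivity)
    exact Finset.sum_le_sum fun j _ => pointwise_bound κ x j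
  have hIj : ∀ j : Fin M, ∫ x, ((1 - φ (x j, x j)) + ∑ i ∈ Finset.Iio j, φ (x i, x j)) ∂μpi
      = (1 - PSr) + ((j:ℕ):ℝ) * QSr := by
    intro j
    have ha : Integrable (fun x : Fin M → A => 1 - φ (x j, x j)) μpi :=
      (integrable_const 1).sub (hint2 j j)
    have hb : Integrable (fun x : Fin M → A => ∑ i ∈ Finset.Iio j, φ (x i, x j)) μpi :=
      integrable_finset_sum _ fun i _ => hint2 i j
    rw [integral_add ha hb, integral_sub (integrable_const 1) (hint2 j j), integral_const,
      integral_finset_sum _ (fun i _ => hint2 i j)]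
    have h1 : ∫ x, φ (x j, x j) ∂μpi = PSr := int_diag κ PX hS j
    have h2 : ∀ i ∈ Finset.Iio j, ∫ x, φ (x i, x j) ∂μpi = QSr :=
      fun i hi => int_pair κ PX hS (Finset.mem_Iio.mp hi).ne
    rw [h1, Finset.sum_congr rfl h2, Finset.sum_const, Fin.card_Iio, nsmul_eq_mul]
    simp
  have hFI : ∫ x, F x ∂μpi = 1 - PSr + (((M:ℝ)-1)/2) * QSr := by
    rw [hF]
    rw [MeasureTheory.integral_const_mul,
      integral_finset_sum _ fun j _ => hterm j, Finset.sum_congr rfl (fun j _ => hIj j),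
      Finset.sum_add_distrib, Finset.sum_const, Finset.card_univ, Fintype.card_fin,
      ← Finset.sum_mul]
    have hgauss : ∑ j : Fin M, ((j:ℕ):ℝ) = (M:ℝ) * ((M:ℝ)-1) / 2 := by
      rw [← Nat.cast_sum]
      have h3 : ∑ j : Fin M, (j:ℕ) = ∑ i ∈ Finset.range M, i :=
        Fin.sum_univ_eq_sum_range (fun i => i) M
      rw [h3]
      have h4 := congrArg (Nat.cast : ℕ → ℝ) (Finset.sum_range_id_mul_two M)
      push_cast [Nat.cast_sub hM] at h4
      push_cast
      linarith
    rw [hgauss]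
    have hMne : (M:ℝ) ≠ 0 := Nat.cast_ne_zero.mpr hM.ne'
    field_simp
    ring
  obtain ⟨x, hx⟩ := exists_le_integral' μpi hFint
  refine ⟨x, decoder S x, decoder_measurable S x hS, ?_⟩
  calc avgError κ M x (decoder S x) ≤ F x := hpb x
    _ ≤ ∫ x, F x ∂μpi := hx
    _ = 1 - PSr + (((M:ℝ)-1)/2) * QSr := hFI

end Coding


/-- The β-β bound with `Q_Y = P_Y` recovers a weakened dependence-testing bound. -/
theorem weakened_dt_bound {A B : Type*} [MeasurableSpace A] [MeasurableSpace B]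
    (κ : ProbabilityTheory.Kernel A B) [ProbabilityTheory.IsMarkovKernel κ]
    (ε : ℝ) (hε : ε ∈ Set.Ioo (0 : ℝ) 1)
    (PX : Measure A) [IsProbabilityMeasure PX]
    (M : ℕ) (hM : 0 < M)
    (hεge : sInf {x : ℝ | ∃ α ∈ Set.Ioo (0 : ℝ) 1,
        x = 1 - α + ((M : ℝ) / 2) * beta α (PX.compProd κ) (PX.prod (PX.bind κ))} ≤ ε) :
    ∃ f : Fin M → A, ∃ g : B → Option (Fin M), Measurable g ∧ avgError κ M f g ≤ ε := by
  obtain ⟨S, hSm, hSle⟩ :=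
    exists_good_set (PX.compProd κ) (PX.prod (PX.bind κ)) ε hε M hεge
  obtain ⟨f, g, hg, hcode⟩ := coding_exists κ PX hSm hM
  exact ⟨f, g, hg, le_trans hcode hSle⟩
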